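/- Let 0 → E → F → G → 0 be a short exact sequence of sheaves of abelian groups on a topological space X. If E and F are both flasque, then G is flasque. -/

import Mathlib

open CategoryTheory CategoryTheory.Limits TopologicalSpace Opposite
noncomputable section
universe u
abbrev Shv (X : TopCat.{u}) := Sheaf (Opens.grothendieckTopology X) AddCommGrpCat.{u}

/-- A sheaf of abelian groups is *flasque* if every restriction map from global
sections is surjective. -/
def IsFlasque {X : TopCat.{u}} (F : Shv X) : Prop :=
  ∀ U : Opens X, Function.Surjective (F.val.map (homOfLE (le_top : U ≤ ⊤)).op)

namespace FlasqueAux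

attribute [local instance] ConcreteCategory.instFunLike

variable {X : TopCat.{u}}

/-- View a sheaf on a site as a `TopCat.Sheaf`. -/
def toTop (F : Shv X) : TopCat.Sheaf AddCommGrpCat.{u} X := F

lemma res_res (F : TopCat.Presheaf AddCommGrpCat.{u} X) {A B C' : Opens X}
    (i : A ⟶ B) (j : B ⟶ C') (k : A ⟶ C') (s : F.obj (op C')) :
    F.map i.op (F.map j.op s) = F.map k.op s := by
  rw [← comp_apply, ← F.map_comp, ← op_comp, Subsingleton.elim (i ≫ j) k]

lemma map_hom_congr (F : TopCat.Presheaf AddCommGrpCat.{u} X) {A B : Opens X}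
    (i j : A ⟶ B) (s : F.obj (op B)) : F.map i.op s = F.map j.op s := by
  rw [Subsingleton.elim i j]

lemma nat_app {F G : TopCat.Presheaf AddCommGrpCat.{u} X} (T : F ⟶ G) {A B : Opens X}
    (i : A ⟶ B) (s : F.obj (op B)) :
    T.app (op A) (F.map i.op s) = G.map i.op (T.app (op B) s) := by
  rw [← comp_apply, T.naturality, comp_apply]

/-- Sections-level exactness of a short exact sequence of sheaves. -/
lemma sections_exact (S : ShortComplex (Shv X)) (hS : S.ShortExact) (V : Opens X)
    (a : S.X₂.val.obj (op V)) (ha : S.g.hom.app (op V) a = 0) :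
    ∃ b : S.X₁.val.obj (op V), S.f.hom.app (op V) b = a := by
  have hm := hS.mono_f
  let Φ : Shv X ⥤ AddCommGrpCat.{u} :=
    sheafToPresheaf _ _ ⋙ (evaluation (Opens ↑X)ᵒᵖ AddCommGrpCat.{u}).obj (op V)
  have hex : (S.map Φ).Exact :=
    hS.exact.map_of_mono_of_preservesKernel Φ hm inferInstance
  exact (ShortComplex.ab_exact_iff _).mp hex a ha

/-- Local surjectivity of the quotient map. -/
lemma local_surj (S : ShortComplex (Shv X)) (hS : S.ShortExact) (U : Opens X)
    (g : S.X₃.val.obj (op U)) (x : ↑X) (hx : x ∈ U) :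
    ∃ (W : Opens X) (ι : W ⟶ U) (s : S.X₂.val.obj (op W)),
      S.g.hom.app (op W) s = S.X₃.val.map ι.op g ∧ x ∈ W := by
  have he := hS.epi_g
  have hls : Sheaf.IsLocallySurjective S.g :=
    (Sheaf.isLocallySurjective_iff_epi' (φ := S.g)).mpr he
  have h2 : TopCat.Presheaf.IsLocallySurjective S.g.hom := hls
  obtain ⟨W, ι, ⟨s, hs⟩, hxW⟩ := ((TopCat.Presheaf.isLocallySurjective_iff S.g.hom).mp h2) U g x hx
  exact ⟨W, homOfLE ι, s, hs, hxW⟩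

variable (S : ShortComplex (Shv X)) (U : Opens X) (g : S.X₃.val.obj (op U))

/-- A partial lift of `g` along `S.g`. -/
structure PartialLift where
  V : Opens X
  hV : V ≤ U
  s : S.X₂.val.obj (op V)
  hs : S.g.hom.app (op V) s = S.X₃.val.map (homOfLE hV).op g

/-- Extension order on partial lifts. -/
def LiftLE (a b : PartialLift S U g) : Prop :=
  ∃ h : a.V ≤ b.V, S.X₂.val.map (homOfLE h).op b.s = a.s

lemma liftLE_trans {a b c : PartialLift S U g} (hab : LiftLE S U g a b)
    (hbc : LiftLE S U g b c) : LiftLE S U g a c := by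
  obtain ⟨h1, e1⟩ := hab
  obtain ⟨h2, e2⟩ := hbc
  exact ⟨h1.trans h2, by rw [← e1, ← e2]; exact (res_res _ _ _ _ _).symm⟩

end FlasqueAux

open FlasqueAux

/-- **Statement 3.** If `0 → E → F → G → 0` is a short exact sequence of sheaves of abelian
groups on a topological space `X` and both `E` and `F` are flasque, then `G` is flasque. -/
theorem flasque_quotient (X : TopCat.{u}) (S : ShortComplex (Shv X))
    (hS : S.ShortExact) (hE : IsFlasque S.X₁) (hF : IsFlasque S.X₂) :
    IsFlasque S.X₃ := by
  intro U g
  -- Step 1: it suffices to lift g to a section f of S.X₂ over U.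
  suffices hlift : ∃ f : S.X₂.val.obj (op U), S.g.hom.app (op U) f = g by
    obtain ⟨f, hf⟩ := hlift
    obtain ⟨f', hf'⟩ := hF U f
    refine ⟨S.g.hom.app (op ⊤) f', ?_⟩
    rw [← nat_app S.g.hom (homOfLE le_top) f', hf', hf]
  -- Nonempty: the empty partial lift.
  have hne : Nonempty (PartialLift S U g) := by
    refine ⟨⟨⊥, bot_le, 0, ?_⟩⟩
    apply TopCat.Presheaf.section_ext (toTop S.X₃) ⊥
    rintro x ⟨⟩
  -- upper bound of a nonempty chain
  have hbdd : ∀ c : Set (PartialLift S U g), IsChain (LiftLE S U g) c → c.Nonempty →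
      ∃ ub, ∀ a ∈ c, LiftLE S U g a ub := by
    intro c hc hcne
    let I : c → Opens X := fun p => p.1.V
    let sf : ∀ p : c, S.X₂.val.obj (op (I p)) := fun p => p.1.s
    have hcomp : TopCat.Presheaf.IsCompatible (toTop S.X₂).val I sf := by
      intro i j
      rcases eq_or_ne i j with rfl | hij
      · exact map_hom_congr _ _ _ _
      · have hshow : (S.X₂.val.map (Opens.infLELeft (I i) (I j)).op i.1.s
            = S.X₂.val.map (Opens.infLERight (I i) (I j)).op j.1.s) →
            (toTop S.X₂).val.map ((I i).infLELeft (I j)).op (sf i)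
            = (toTop S.X₂).val.map ((I i).infLERight (I j)).op (sf j) := fun h => h
        apply hshow
        rcases hc i.2 j.2 (fun h => hij (Subtype.ext h)) with h | h
        · obtain ⟨hle, heq⟩ := h
          rw [← heq]
          exact res_res S.X₂.val _ (homOfLE hle) _ j.1.s
        · obtain ⟨hle, heq⟩ := h
          rw [← heq]
          exact (res_res S.X₂.val _ (homOfLE hle) _ i.1.s).symm
    obtain ⟨s', hs', -⟩ := TopCat.Sheaf.existsUnique_gluing (toTop S.X₂) I sf hcomp
    have hs'' : ∀ p : c, S.X₂.val.map (Opens.leSupr I p).op s' = p.1.s := hs'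
    have hVU : iSup I ≤ U := iSup_le fun p => p.1.hV
    have hsg : S.g.hom.app (op (iSup I)) s' = S.X₃.val.map (homOfLE hVU).op g := by
      apply TopCat.Sheaf.eq_of_locally_eq (toTop S.X₃) I
      intro i
      show S.X₃.val.map _ _ = S.X₃.val.map _ _
      rw [← nat_app S.g.hom (Opens.leSupr I i) s', hs'' i, i.1.hs,
        res_res S.X₃.val (Opens.leSupr I i) (homOfLE hVU) (homOfLE i.1.hV) g]
    refine ⟨⟨iSup I, hVU, s', hsg⟩, fun a ha => ⟨le_iSup I ⟨a, ha⟩, ?_⟩⟩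
    exact (map_hom_congr _ _ (Opens.leSupr I ⟨a, ha⟩) s').trans (hs'' ⟨a, ha⟩)
  -- Zorn.
  obtain ⟨m, hm⟩ := exists_maximal_of_nonempty_chains_bounded (r := LiftLE S U g)
    hbdd (liftLE_trans S U g)
  -- `m.V = U`.
  have hVU : U ≤ m.V := by
    intro x hx
    by_contra hxV
    obtain ⟨W, ιWU, t₀, ht₀, hxW⟩ := local_surj S hS U g x hx
    -- difference on the intersection
    set D := m.V ⊓ W with hD
    set d : S.X₂.val.obj (op D) := S.X₂.val.map (homOfLE inf_le_left).op m.s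
      - S.X₂.val.map (homOfLE inf_le_right).op t₀ with hd
    have hd0 : S.g.hom.app (op D) d = 0 := by
      rw [hd, map_sub, nat_app S.g.hom (homOfLE inf_le_left) m.s,
        nat_app S.g.hom (homOfLE inf_le_right) t₀, m.hs, ht₀,
        res_res S.X₃.val (homOfLE inf_le_left) (homOfLE m.hV)
          (homOfLE (inf_le_left.trans m.hV)) g,
        res_res S.X₃.val (homOfLE inf_le_right) ιWU
          (homOfLE (inf_le_left.trans m.hV)) g, sub_self]
    obtain ⟨e, he⟩ := sections_exact S hS D d hd0
    obtain ⟨e', he'⟩ := hE D e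
    -- corrected local lift over W
    set t : S.X₂.val.obj (op W) :=
      t₀ + S.f.hom.app (op W) (S.X₁.val.map (homOfLE (le_top : W ≤ ⊤)).op e') with ht
    have hz : ∀ (V : Opens X) (y : S.X₁.val.obj (op V)),
        S.g.hom.app (op V) (S.f.hom.app (op V) y) = 0 := by
      intro V y
      have h0 : S.f.hom ≫ S.g.hom = 0 := congrArg InducedCategory.Hom.hom S.zero
      rw [← comp_apply, ← NatTrans.comp_app, h0]
      rfl
    have htg : S.g.hom.app (op W) t = S.X₃.val.map ιWU.op g := by
      rw [ht, map_add, hz, ht₀, add_zero]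
    have hagree : S.X₂.val.map (homOfLE inf_le_left).op m.s
        = S.X₂.val.map (homOfLE inf_le_right).op t := by
      rw [ht, map_add, ← nat_app S.f.hom (homOfLE inf_le_right),
        res_res S.X₁.val (homOfLE inf_le_right) (homOfLE le_top)
          (homOfLE (le_top : D ≤ ⊤)) e', he', he, hd]
      abel
    -- glue m.s and t over m.V ⊔ W
    let I : ULift.{u} Bool → Opens X := fun b => match b with
      | ⟨true⟩ => m.V
      | ⟨false⟩ => W
    let sf : ∀ b, S.X₂.val.obj (op (I b)) := fun b => match b with
      | ⟨true⟩ => m.s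
      | ⟨false⟩ => t
    have hcomp : TopCat.Presheaf.IsCompatible (toTop S.X₂).val I sf := by
      have h2 := congrArg
        (S.X₂.val.map (homOfLE (le_inf inf_le_right inf_le_left : W ⊓ m.V ≤ D)).op) hagree
      rw [res_res S.X₂.val (homOfLE (le_inf inf_le_right inf_le_left)) (homOfLE inf_le_left)
          (homOfLE (inf_le_right : W ⊓ m.V ≤ m.V)) m.s,
        res_res S.X₂.val (homOfLE (le_inf inf_le_right inf_le_left)) (homOfLE inf_le_right)
          (homOfLE (inf_le_left : W ⊓ m.V ≤ W)) t] at h2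
      rintro ⟨b1⟩ ⟨b2⟩ <;> cases b1 <;> cases b2
      · exact map_hom_congr _ _ _ _
      · exact (map_hom_congr _ _ _ t).trans (h2.symm.trans (map_hom_congr _ _ _ m.s))
      · exact (map_hom_congr _ _ _ m.s).trans (hagree.trans (map_hom_congr _ _ _ t))
      · exact map_hom_congr _ _ _ _
    obtain ⟨s', hs', -⟩ := TopCat.Sheaf.existsUnique_gluing' (toTop S.X₂) I (m.V ⊔ W)
      (fun b => match b with
        | ⟨true⟩ => homOfLE le_sup_left
        | ⟨false⟩ => homOfLE le_sup_right)
      (sup_le (le_iSup I ⟨true⟩) (le_iSup I ⟨false⟩)) sf hcomp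
    have hVWU : (m.V ⊔ W) ≤ U := sup_le m.hV ιWU.le
    have e1 : S.X₂.val.map (homOfLE (le_sup_left : m.V ≤ (m.V ⊔ W))).op s' = m.s := hs' ⟨true⟩
    have e2 : S.X₂.val.map (homOfLE (le_sup_right : W ≤ (m.V ⊔ W))).op s' = t := hs' ⟨false⟩
    have hs'g : S.g.hom.app (op (m.V ⊔ W)) s' = S.X₃.val.map (homOfLE hVWU).op g := by
      apply TopCat.Sheaf.eq_of_locally_eq₂ (toTop S.X₃)
        (homOfLE (le_sup_left : m.V ≤ (m.V ⊔ W))) (homOfLE (le_sup_right : W ≤ (m.V ⊔ W))) le_rfl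
      · show S.X₃.val.map _ _ = S.X₃.val.map _ _
        rw [← nat_app S.g.hom (homOfLE (le_sup_left : m.V ≤ (m.V ⊔ W))) s', e1, m.hs,
          res_res S.X₃.val (homOfLE (le_sup_left : m.V ≤ (m.V ⊔ W))) (homOfLE hVWU)
            (homOfLE m.hV) g]
      · show S.X₃.val.map _ _ = S.X₃.val.map _ _
        rw [← nat_app S.g.hom (homOfLE (le_sup_right : W ≤ (m.V ⊔ W))) s', e2, htg,
          res_res S.X₃.val (homOfLE (le_sup_right : W ≤ (m.V ⊔ W))) (homOfLE hVWU) ιWU g]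
    have h1 : LiftLE S U g m ⟨(m.V ⊔ W), hVWU, s', hs'g⟩ := ⟨le_sup_left, e1⟩
    obtain ⟨h2, -⟩ := hm _ h1
    exact hxV (h2 ((le_sup_right : W ≤ (m.V ⊔ W)) hxW))
  -- conclude: restrict m.s to U
  refine ⟨S.X₂.val.map (homOfLE hVU).op m.s, ?_⟩
  rw [nat_app S.g.hom (homOfLE hVU) m.s, m.hs,
    res_res S.X₃.val (homOfLE hVU) (homOfLE m.hV) (𝟙 U) g, op_id, S.X₃.val.map_id]
  rfl
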